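/- Let A be an n×n Hermitian matrix and let x be a vector with x†x = 1. Set Π = I - x x† and M = Π A Π. Then det(M - λI) = -λ · det(A - λI) · Tr((A - λI)^{-1} x x†) for all λ not an eigenvalue of A. -/

import Mathlib

open Matrix

/-- Let `A` be an `n×n` Hermitian matrix and `x` a vector with `x† x = 1`.
Set `Π = 1 - x x†` and `M = Π A Π`.  Then for every `λ` that is not an
eigenvalue of `A` (i.e. `det (A - λ 1) ≠ 0`),
`det (M - λ 1) = -λ · det (A - λ 1) · Tr ((A - λ 1)⁻¹ x x†)`. -/
theorem stmt0 {n : ℕ} (A : Matrix (Fin n) (Fin n) ℂ) (hA : A.IsHermitian)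
    (x : Fin n → ℂ) (hx : star x ⬝ᵥ x = 1) (lam : ℂ)
    (hlam : (A - lam • (1 : Matrix (Fin n) (Fin n) ℂ)).det ≠ 0) :
    ((((1 : Matrix (Fin n) (Fin n) ℂ) - vecMulVec x (star x)) * A *
        ((1 : Matrix (Fin n) (Fin n) ℂ) - vecMulVec x (star x))) -
        lam • (1 : Matrix (Fin n) (Fin n) ℂ)).det =
      -lam * (A - lam • (1 : Matrix (Fin n) (Fin n) ℂ)).det *
        ((A - lam • (1 : Matrix (Fin n) (Fin n) ℂ))⁻¹ * vecMulVec x (star x)).trace := by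
  set B : Matrix (Fin n) (Fin n) ℂ := A - lam • 1 with hB
  have hBu : IsUnit B.det := isUnit_iff_ne_zero.mpr hlam
  set γ : ℂ := star x ⬝ᵥ A *ᵥ x with hγ
  set w₁ : Fin n → ℂ := -(star x ᵥ* A) with hw₁
  set u₂ : Fin n → ℂ := γ • x - A *ᵥ x with hu₂
  set U : Matrix (Fin n) (Fin 2) ℂ := (Matrix.of ![x, u₂])ᵀ with hU
  set W : Matrix (Fin 2) (Fin n) ℂ := Matrix.of ![w₁, star x] with hW
  set y : Fin n → ℂ := B⁻¹ *ᵥ x with hy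
  set s : ℂ := star x ⬝ᵥ y with hs
  -- rewrite the LHS matrix as B + U * W
  have hLHS : (((1 : Matrix (Fin n) (Fin n) ℂ) - vecMulVec x (star x)) * A *
        ((1 : Matrix (Fin n) (Fin n) ℂ) - vecMulVec x (star x))) -
        lam • (1 : Matrix (Fin n) (Fin n) ℂ) = B + U * W := by
    ext i k
    simp only [hB, hU, hW, hw₁, hu₂, hγ, Matrix.sub_apply, Matrix.add_apply, Matrix.smul_apply, mul_apply,
      one_apply, vecMulVec_apply, Fin.sum_univ_two, of_apply, transpose_apply,
      Matrix.cons_val_zero, Matrix.cons_val_one, Matrix.head_cons, Pi.neg_apply,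
      Pi.sub_apply, Pi.smul_apply, vecMul, mulVec, dotProduct, smul_eq_mul,
      Finset.sum_mul, Finset.mul_sum, sub_mul, mul_sub, one_mul, mul_one,
      mul_ite, ite_mul, mul_zero, zero_mul, Finset.sum_ite_eq, Finset.sum_ite_eq',
      Finset.mem_univ, if_true]
    rw [Finset.sum_comm]
    ring_nf
    have h1 : (∑ j, x i * star x j * A j k) = x i * ∑ j, star x j * A j k := by
      rw [Finset.mul_sum]; exact Finset.sum_congr rfl fun _ _ => by ring
    have h2 : (∑ j, ∑ l, x i * star x j * A j l * x l * star x k)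
        = ∑ j, ∑ l, star x j * A j l * x l * x i * star x k :=
      Finset.sum_congr rfl fun _ _ => Finset.sum_congr rfl fun _ _ => by ring
    rw [h1, show (∑ j, A i j * x j * star x k) = ∑ j, star x k * A i j * x j from
      Finset.sum_congr rfl fun _ _ => by ring]
    ring
  -- basic facts about y
  have hBy : B *ᵥ y = x := by
    rw [hy, mulVec_mulVec, mul_nonsing_inv _ hBu, one_mulVec]
  have hAy : A *ᵥ y = x + lam • y := by
    have : A = B + lam • 1 := by rw [hB, sub_add_cancel]
    rw [this, add_mulVec, hBy, smul_mulVec, one_mulVec]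
  have hinvAx : B⁻¹ *ᵥ (A *ᵥ x) = x + lam • y := by
    have : A *ᵥ x = B *ᵥ x + lam • x := by
      rw [hB, sub_mulVec, smul_mulVec, one_mulVec, sub_add_cancel]
    rw [this, mulVec_add, mulVec_mulVec, nonsing_inv_mul _ hBu, one_mulVec,
      mulVec_smul, hy]
  have hinvu₂ : B⁻¹ *ᵥ u₂ = (γ - lam) • y - x := by
    rw [hu₂, mulVec_sub, mulVec_smul, hinvAx, hy]
    module
  have hxAy : star x ⬝ᵥ A *ᵥ y = 1 + lam * s := by
    rw [hAy, dotProduct_add, hx, dotProduct_smul, hs, smul_eq_mul]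
  have hw₁y : w₁ ⬝ᵥ y = -(1 + lam * s) := by
    rw [hw₁, neg_dotProduct, ← dotProduct_mulVec, hxAy]
  have hw₁x : w₁ ⬝ᵥ x = -γ := by
    rw [hw₁, neg_dotProduct, ← dotProduct_mulVec, hγ]
  have e00 : w₁ ⬝ᵥ B⁻¹ *ᵥ x = -(1 + lam * s) := by rw [← hy, hw₁y]
  have e01 : w₁ ⬝ᵥ B⁻¹ *ᵥ u₂ = γ - (γ - lam) * (1 + lam * s) := by
    rw [hinvu₂, dotProduct_sub, dotProduct_smul, hw₁y, hw₁x, smul_eq_mul]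
    ring
  have e10 : star x ⬝ᵥ B⁻¹ *ᵥ x = s := by rw [← hy, hs]
  have e11 : star x ⬝ᵥ B⁻¹ *ᵥ u₂ = (γ - lam) * s - 1 := by
    rw [hinvu₂, dotProduct_sub, dotProduct_smul, ← hs, hx, smul_eq_mul]
  have hM2 : (1 : Matrix (Fin 2) (Fin 2) ℂ) + W * B⁻¹ * U =
      !![-(lam * s), γ - (γ - lam) * (1 + lam * s);
         s, (γ - lam) * s] := by
    have hent : ∀ (j j' : Fin 2), (W * B⁻¹ * U) j j'
        = (![w₁, star x] j) ⬝ᵥ B⁻¹ *ᵥ (![x, u₂] j') := by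
      intro j j'
      rw [Matrix.mul_assoc, Matrix.mul_apply]
      simp only [Matrix.mul_apply, dotProduct, mulVec, hU, hW, Matrix.of_apply,
        Matrix.transpose_apply]
    ext j j'
    rw [Matrix.add_apply, hent]
    fin_cases j <;> fin_cases j' <;>
      simp [e00, e01, e10, e11, Matrix.one_apply] <;> ring
  have htr : (B⁻¹ * vecMulVec x (star x)).trace = s := by
    rw [hs, hy, trace, dotProduct]
    congr 1
    ext i
    simp [Matrix.diag, Matrix.mul_apply, vecMulVec_apply, mulVec, dotProduct,
      Finset.mul_sum]
    exact Finset.sum_congr rfl fun _ _ => by ring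
  rw [hLHS, det_add_mul U W hBu, hM2, htr, det_fin_two_of]
  ring
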